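/- arXiv:1306.3146 — 2 statements merged into one kernel-verified Lean document; each statement's English description precedes it below -/
import Mathlib

section
/- Total additivity of the extremal Kostant degree in type A: let m ≥ 2, let λ, μ ∈ ℤ^m both be dominant (nonincreasing), and let w be any permutation of {1,…,m}. Then n(λ + μ, w) = n(λ, w) + n(μ, w). -/
/-- The positive roots of type `A_{m-1}`, realized in `ℤ^m` as the vectors
`ε_i - ε_j` for `i < j`. -/
def typeAPositiveRoots (m : ℕ) : Set (Fin m → ℤ) :=
  {v | ∃ i j : Fin m, i < j ∧ v = Pi.single i 1 - Pi.single j 1}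

/-- The set of lengths of decompositions of `v` into a sum of positive roots of
type `A_{m-1}` (with repetitions). -/
def typeADecompLengths (m : ℕ) (v : Fin m → ℤ) : Set ℕ :=
  {N | ∃ l : List (Fin m → ℤ),
    (∀ u ∈ l, u ∈ typeAPositiveRoots m) ∧ l.sum = v ∧ l.length = N}

open Finset

private lemma root_apply' {m : ℕ} (i j t : Fin m) :
    (Pi.single i 1 - Pi.single j 1 : Fin m → ℤ) t
      = (if t = i then 1 else 0) - (if t = j then 1 else 0) := by
  simp [Pi.single_apply]

private lemma root_toNat_sum {m : ℕ} {i j : Fin m} (hij : i < j) :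
    ∑ t, ((Pi.single i 1 - Pi.single j 1 : Fin m → ℤ) t).toNat = 1 := by
  have hne : i ≠ j := ne_of_lt hij
  rw [Finset.sum_eq_single_of_mem i (mem_univ i)]
  · rw [root_apply']
    simp [hne]
  · intro t _ hti
    rw [root_apply']
    split_ifs with h1 h2 h2 <;> simp_all

private lemma length_lower_bound {m : ℕ} (l : List (Fin m → ℤ))
    (hl : ∀ u ∈ l, u ∈ typeAPositiveRoots m) :
    ∑ t, (l.sum t).toNat ≤ l.length := by
  induction l with
  | nil => simp
  | cons x xs ih =>
    obtain ⟨i, j, hij, hx⟩ := hl x List.mem_cons_self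
    have h1 : ∑ t, (xs.sum t).toNat ≤ xs.length :=
      ih (fun u hu => hl u (List.mem_cons_of_mem x hu))
    have h2 : ∀ t, ((x :: xs).sum t).toNat ≤ (x t).toNat + (xs.sum t).toNat := by
      intro t; rw [List.sum_cons]; simp only [Pi.add_apply]; omega
    calc ∑ t, ((x :: xs).sum t).toNat
        ≤ ∑ t, ((x t).toNat + (xs.sum t).toNat) := Finset.sum_le_sum (fun t _ => h2 t)
      _ = ∑ t, (x t).toNat + ∑ t, (xs.sum t).toNat := Finset.sum_add_distrib
      _ ≤ 1 + xs.length := by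
          rw [hx, root_toNat_sum hij]; omega
      _ = (x :: xs).length := by simp [Nat.add_comm]

private lemma sum_le_initial {m : ℕ} (lam : Fin m → ℤ)
    (hlam : ∀ i j : Fin m, i ≤ j → lam j ≤ lam i) :
    ∀ n (S T : Finset (Fin m)), S.card = n → T.card = n →
      (∀ t ∈ T, ∀ u, u ≤ t → u ∈ T) →
      ∑ s ∈ S, lam s ≤ ∑ t ∈ T, lam t := by
  intro n
  induction n with
  | zero =>
    intro S T hS hT _
    rw [Finset.card_eq_zero] at hS hT
    subst hS; subst hT; simp
  | succ n ih =>
    intro S T hS hT hTdc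
    have hSne : S.Nonempty := Finset.card_pos.mp (by omega)
    have hTne : T.Nonempty := Finset.card_pos.mp (by omega)
    set sM := S.max' hSne with hsM
    set tM := T.max' hTne with htM
    have hTsub : T ⊆ Finset.Iic tM := fun t ht => Finset.mem_Iic.mpr (Finset.le_max' T t ht)
    have hTsup : Finset.Iic tM ⊆ T := fun u hu =>
      hTdc tM (Finset.max'_mem T hTne) u (Finset.mem_Iic.mp hu)
    have hTeq : T = Finset.Iic tM := Finset.Subset.antisymm hTsub hTsup
    have hSsub : S ⊆ Finset.Iic sM := fun s hs => Finset.mem_Iic.mpr (Finset.le_max' S s hs)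
    have htM_le : tM ≤ sM := by
      have h1 : S.card ≤ (Finset.Iic sM).card := Finset.card_le_card hSsub
      have h2 : (Finset.Iic tM).card = T.card := by rw [← hTeq]
      rw [Fin.card_Iic] at h1 h2
      have : (tM : ℕ) ≤ (sM : ℕ) := by omega
      exact this
    have hkey : lam sM ≤ lam tM := hlam tM sM htM_le
    have hS' : (S.erase sM).card = n := by
      rw [Finset.card_erase_of_mem (S.max'_mem hSne)]; omega
    have hT' : (T.erase tM).card = n := by
      rw [Finset.card_erase_of_mem (T.max'_mem hTne)]; omega
    have hT'dc : ∀ t ∈ T.erase tM, ∀ u, u ≤ t → u ∈ T.erase tM := by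
      intro t ht u hu
      have htT : t ∈ T := Finset.mem_of_mem_erase ht
      have htne : t ≠ tM := Finset.ne_of_mem_erase ht
      refine Finset.mem_erase.mpr ⟨?_, hTdc t htT u hu⟩
      intro h
      subst h
      exact htne (le_antisymm (Finset.le_max' T t htT) hu)
    calc ∑ s ∈ S, lam s
        = ∑ s ∈ S.erase sM, lam s + lam sM :=
          (Finset.sum_erase_add _ _ (S.max'_mem hSne)).symm
      _ ≤ ∑ t ∈ T.erase tM, lam t + lam tM :=
          add_le_add (ih _ _ hS' hT' hT'dc) hkey
      _ = ∑ t ∈ T, lam t := Finset.sum_erase_add _ _ (T.max'_mem hTne)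

private lemma partial_nonneg {m : ℕ} (lam : Fin m → ℤ)
    (hlam : ∀ i j : Fin m, i ≤ j → lam j ≤ lam i)
    (w : Equiv.Perm (Fin m)) (k : ℕ) :
    0 ≤ ∑ i ∈ univ.filter (fun i : Fin m => (i : ℕ) < k), (lam i - lam (w i)) := by
  set F := univ.filter (fun i : Fin m => (i : ℕ) < k) with hF
  rw [Finset.sum_sub_distrib, sub_nonneg]
  have himg : ∑ i ∈ F, lam (w i) = ∑ s ∈ F.image w, lam s :=
    (Finset.sum_image (fun a _ b _ h => w.injective h)).symm
  rw [himg]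
  refine sum_le_initial lam hlam F.card (F.image w) F
    (Finset.card_image_of_injective F w.injective) rfl ?_
  intro t ht u hu
  simp only [hF, mem_filter, mem_univ, true_and] at ht ⊢
  have : (u : ℕ) ≤ (t : ℕ) := hu
  omega

private lemma exists_decomp {m : ℕ} :
    ∀ N (v : Fin m → ℤ), (∑ i, (v i).toNat) = N → (∑ i, v i) = 0 →
      (∀ k : ℕ, 0 ≤ ∑ i ∈ univ.filter (fun i : Fin m => (i : ℕ) < k), v i) →
      ∃ l : List (Fin m → ℤ), (∀ u ∈ l, u ∈ typeAPositiveRoots m) ∧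
        l.sum = v ∧ l.length = N := by
  intro N
  induction N using Nat.strong_induction_on with
  | _ N ih =>
  intro v hN h0 h1
  by_cases hz : ∀ t, v t = 0
  · have hN0 : N = 0 := by
      rw [← hN]
      apply Finset.sum_eq_zero
      intro t _
      rw [hz t]; rfl
    subst hN0
    refine ⟨[], by simp, ?_, rfl⟩
    funext t
    simp [hz t]
  · push_neg at hz
    obtain ⟨t0, ht0⟩ := hz
    set A : Finset (Fin m) := univ.filter (fun t => v t ≠ 0) with hA
    have hAne : A.Nonempty := ⟨t0, by simp [hA, ht0]⟩
    set i := A.min' hAne with hi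
    have hiA : v i ≠ 0 := by
      have := A.min'_mem hAne
      simp only [hA, mem_filter] at this
      exact this.2
    have hzero_lt : ∀ t : Fin m, t < i → v t = 0 := by
      intro t ht
      by_contra h
      have : i ≤ t := A.min'_le t (by simp [hA, h])
      exact absurd ht (not_lt.mpr this)
    have hvi_pos : 0 < v i := by
      have hsum := h1 ((i : ℕ) + 1)
      have heq : ∑ t ∈ univ.filter (fun t : Fin m => (t : ℕ) < (i : ℕ) + 1), v t = v i := by
        rw [Finset.sum_eq_single_of_mem i (by simp)]
        intro t ht hti
        simp only [mem_filter, mem_univ, true_and] at ht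
        apply hzero_lt
        have h1' : (t : ℕ) ≤ (i : ℕ) := by omega
        exact lt_of_le_of_ne (Fin.le_def.mpr h1') hti
      rw [heq] at hsum
      omega
    set B : Finset (Fin m) := univ.filter (fun t => v t < 0) with hB
    have hBne : B.Nonempty := by
      by_contra h
      rw [Finset.not_nonempty_iff_eq_empty] at h
      have hall : ∀ t : Fin m, 0 ≤ v t := by
        intro t
        by_contra hlt
        have : t ∈ B := by simp only [hB, mem_filter, mem_univ, true_and]; omega
        simp [h] at this
      have := (Finset.sum_eq_zero_iff_of_nonneg (fun t _ => hall t)).mp h0 i (mem_univ i)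
      omega
    set j := B.min' hBne with hj
    have hvj_neg : v j < 0 := by
      have := B.min'_mem hBne
      simp only [hB, mem_filter] at this
      exact this.2
    have hij : i < j := by
      have hne : i ≠ j := fun h => by rw [h] at hvi_pos; omega
      have hle : i ≤ j := A.min'_le j (by simp only [hA, mem_filter, mem_univ, true_and]; omega)
      exact lt_of_le_of_ne hle hne
    have hnonneg_lt : ∀ t : Fin m, t < j → 0 ≤ v t := by
      intro t ht
      by_contra h
      have : j ≤ t := B.min'_le t (by simp only [hB, mem_filter, mem_univ, true_and]; omega)
      exact absurd ht (not_lt.mpr this)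
    set r : Fin m → ℤ := Pi.single i 1 - Pi.single j 1 with hr
    have hrroot : r ∈ typeAPositiveRoots m := ⟨i, j, hij, rfl⟩
    set v' : Fin m → ℤ := v - r with hv'
    have hv'app : ∀ t, v' t = v t - ((if t = i then 1 else 0) - (if t = j then 1 else 0)) := by
      intro t
      rw [hv', Pi.sub_apply, hr, root_apply']
    have hrsum : ∀ F : Finset (Fin m),
        ∑ t ∈ F, r t = (if i ∈ F then 1 else 0) - (if j ∈ F then 1 else 0) := by
      intro F
      have : ∀ t ∈ F, r t = (if t = i then (1:ℤ) else 0) - (if t = j then 1 else 0) :=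
        fun t _ => by rw [hr, root_apply']
      rw [Finset.sum_congr rfl this, Finset.sum_sub_distrib,
        Finset.sum_ite_eq' F i (fun _ => (1:ℤ)), Finset.sum_ite_eq' F j (fun _ => (1:ℤ))]
    have h0' : ∑ t, v' t = 0 := by
      have : ∑ t, v' t = ∑ t, v t - ∑ t, r t := by
        rw [hv']
        simp only [Pi.sub_apply]
        rw [Finset.sum_sub_distrib]
      rw [this, h0, hrsum univ]
      simp
    have h1' : ∀ k : ℕ, 0 ≤ ∑ t ∈ univ.filter (fun t : Fin m => (t : ℕ) < k), v' t := by
      intro k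
      set F := univ.filter (fun t : Fin m => (t : ℕ) < k) with hF
      have hsplit : ∑ t ∈ F, v' t
          = ∑ t ∈ F, v t - ((if i ∈ F then 1 else 0) - (if j ∈ F then 1 else 0)) := by
        have : ∑ t ∈ F, v' t = ∑ t ∈ F, v t - ∑ t ∈ F, r t := by
          rw [hv']
          simp only [Pi.sub_apply]
          rw [Finset.sum_sub_distrib]
        rw [this, hrsum F]
      rw [hsplit]
      by_cases hjF : j ∈ F
      · have hiF : i ∈ F := by
          simp only [hF, mem_filter, mem_univ, true_and] at hjF ⊢
          have : (i : ℕ) < (j : ℕ) := hij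
          omega
        simp only [hiF, hjF, if_true, sub_self, sub_zero]
        exact h1 k
      · by_cases hiF : i ∈ F
        · simp only [hiF, hjF, if_true, if_false, sub_zero]
          have hterm : ∀ t ∈ F, 0 ≤ v t := by
            intro t ht
            simp only [hF, mem_filter, mem_univ, true_and] at ht
            have hjk : ¬ ((j : ℕ) < k) := by
              simpa only [hF, mem_filter, mem_univ, true_and] using hjF
            apply hnonneg_lt
            exact Fin.lt_def.mpr (by omega)
          have hle := Finset.single_le_sum hterm hiF
          omega
        · simp only [hiF, hjF, if_false, sub_self, sub_zero]
          exact h1 k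
    have hNpos : 1 ≤ N := by
      rw [← hN]
      calc 1 ≤ (v i).toNat := by omega
        _ ≤ ∑ t, (v t).toNat :=
            Finset.single_le_sum (f := fun t => (v t).toNat) (fun t _ => Nat.zero_le _) (mem_univ i)
    have hcong : ∀ t ∈ univ.erase i, (v' t).toNat = (v t).toNat := by
      intro t ht
      have htne : t ≠ i := Finset.ne_of_mem_erase ht
      by_cases htj : t = j
      · have hvt : v' t = v t + 1 := by rw [hv'app]; simp [htne, htj, hij.ne']
        have hvt2 : v t < 0 := htj ▸ hvj_neg
        omega
      · have hvt : v' t = v t := by rw [hv'app]; simp [htne, htj, hij.ne']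
        rw [hvt]
    have hine : i ≠ j := ne_of_lt hij
    have hvi' : v' i = v i - 1 := by rw [hv'app]; simp [hine]
    have hN' : ∑ t, (v' t).toNat = N - 1 := by
      have e1 := Finset.sum_erase_add univ (fun t => (v' t).toNat) (mem_univ i)
      have e2 := Finset.sum_erase_add univ (fun t => (v t).toNat) (mem_univ i)
      have e3 : ∑ t ∈ univ.erase i, (v' t).toNat = ∑ t ∈ univ.erase i, (v t).toNat :=
        Finset.sum_congr rfl hcong
      rw [e3] at e1
      have hvi'' : (v' i).toNat = (v i).toNat - 1 := by omega
      omega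
    obtain ⟨l', hl'roots, hl'sum, hl'len⟩ := ih (N - 1) (by omega) v' hN' h0' h1'
    refine ⟨r :: l', ?_, ?_, ?_⟩
    · intro u hu
      rcases List.mem_cons.mp hu with h | h
      · rw [h]; exact hrroot
      · exact hl'roots u h
    · rw [List.sum_cons, hl'sum, hv']
      abel
    · simp only [List.length_cons, hl'len]
      omega

private lemma isLeast_decomp {m : ℕ} (lam : Fin m → ℤ)
    (hlam : ∀ i j : Fin m, i ≤ j → lam j ≤ lam i) (w : Equiv.Perm (Fin m)) :
    IsLeast (typeADecompLengths m (fun i => lam i - lam (w i)))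
      (∑ i, (lam i - lam (w i)).toNat) := by
  constructor
  · obtain ⟨l, hroots, hsum, hlen⟩ := exists_decomp (∑ i, (lam i - lam (w i)).toNat)
      (fun i => lam i - lam (w i)) rfl
      (by rw [Finset.sum_sub_distrib, Equiv.sum_comp w lam, sub_self])
      (fun k => partial_nonneg lam hlam w k)
    exact ⟨l, hroots, hsum, hlen⟩
  · rintro N ⟨l, hroots, hsum, hlen⟩
    have h := length_lower_bound l hroots
    rw [hsum, hlen] at h
    exact h

/-- Total additivity of the extremal Kostant degree in type `A`: for dominant
(nonincreasing) `λ, μ ∈ ℤ^m` and any permutation `w`, one has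
`n(λ + μ, w) = n(λ, w) + n(μ, w)`. -/
theorem extremal_kostant_additivity_typeA (m : ℕ) (hm : 2 ≤ m)
    (lam mu : Fin m → ℤ)
    (hlam : ∀ i j : Fin m, i ≤ j → lam j ≤ lam i)
    (hmu : ∀ i j : Fin m, i ≤ j → mu j ≤ mu i)
    (w : Equiv.Perm (Fin m)) :
    ∃ a b : ℕ,
      IsLeast (typeADecompLengths m (fun i => lam i - lam (w i))) a ∧
      IsLeast (typeADecompLengths m (fun i => mu i - mu (w i))) b ∧
      IsLeast (typeADecompLengths m
        (fun i => (lam i + mu i) - (lam (w i) + mu (w i)))) (a + b) := by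
  refine ⟨∑ i, (lam i - lam (w i)).toNat, ∑ i, (mu i - mu (w i)).toNat,
    isLeast_decomp lam hlam w, isLeast_decomp mu hmu w, ?_⟩
  have hdom : ∀ i j : Fin m, i ≤ j → (lam j + mu j) ≤ (lam i + mu i) :=
    fun i j h => add_le_add (hlam i j h) (hmu i j h)
  have hkey := isLeast_decomp (fun i => lam i + mu i) hdom w
  have hsum : ∑ i, ((lam i + mu i) - (lam (w i) + mu (w i))).toNat
      = ∑ i, (lam i - lam (w i)).toNat + ∑ i, (mu i - mu (w i)).toNat := by
    rw [← Finset.sum_add_distrib]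
    refine Finset.sum_congr rfl fun i _ => ?_
    rcases le_total i (w i) with h | h
    · have h1 := hlam i (w i) h
      have h2 := hmu i (w i) h
      omega
    · have h1 := hlam (w i) i h
      have h2 := hmu (w i) i h
      omega
  rw [hsum] at hkey
  exact hkey
end

section
/- Twisted extremal Kostant degree of the highest short root: let R be a finite reduced irreducible crystallographic root system with positive roots R₊, Weyl group W, and let ϑ be the highest short root (the unique dominant root of minimal length). Then for every w ∈ W: n^ν(ϑ, w) = 0 if w(ϑ) = ϑ; n^ν(ϑ, w) = 1 if (w(ϑ), ϑ) > 0 and w(ϑ) ≠ ϑ; and n^ν(ϑ, w) = 2 if (w(ϑ), ϑ) ≤ 0. -/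
open scoped RealInnerProductSpace

/-- A finite reduced irreducible crystallographic root system in a real inner
product space `V`. -/
structure IsRootSystem {V : Type*} [NormedAddCommGroup V] [InnerProductSpace ℝ V]
    (R : Set V) : Prop where
  finite : R.Finite
  span_top : Submodule.span ℝ R = ⊤
  ne_zero : ∀ α ∈ R, α ≠ (0 : V)
  reflect_mem : ∀ α ∈ R, ∀ β ∈ R, β - (2 * ⟪β, α⟫ / ⟪α, α⟫) • α ∈ R
  integral : ∀ α ∈ R, ∀ β ∈ R, ∃ k : ℤ, 2 * ⟪β, α⟫ / ⟪α, α⟫ = (k : ℝ)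
  reduced : ∀ α ∈ R, ∀ c : ℝ, c • α ∈ R → c = 1 ∨ c = -1
  irreducible : ¬ ∃ R₁ R₂ : Set V, R₁.Nonempty ∧ R₂.Nonempty ∧ R = R₁ ∪ R₂ ∧
    ∀ α ∈ R₁, ∀ β ∈ R₂, ⟪α, β⟫ = 0

/-- The set of positive roots determined by a linear functional `f` nonvanishing
on the roots. -/
def posRoots {V : Type*} [NormedAddCommGroup V] [InnerProductSpace ℝ V]
    (R : Set V) (f : V →ₗ[ℝ] ℝ) : Set V :=
  {α | α ∈ R ∧ 0 < f α}

/-- The simple roots: positive roots which are not sums of two positive roots. -/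
def simpleRoots {V : Type*} [NormedAddCommGroup V] [InnerProductSpace ℝ V]
    (R : Set V) (f : V →ₗ[ℝ] ℝ) : Set V :=
  {α | α ∈ posRoots R f ∧ ¬ ∃ β ∈ posRoots R f, ∃ γ ∈ posRoots R f, α = β + γ}

/-- The reflection `s_α : x ↦ x - (x,α∨) α`, as a self-map of `V`. -/
noncomputable def rootReflection {V : Type*} [NormedAddCommGroup V]
    [InnerProductSpace ℝ V] (α : V) : Function.End V :=
  fun x => x - (2 * ⟪x, α⟫ / ⟪α, α⟫) • α

/-- The Weyl group, realized as the submonoid of self-maps of `V` generated by the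
reflections in the roots (each reflection is an involution, so this is the group
generated by them). -/
noncomputable def weylMonoid {V : Type*} [NormedAddCommGroup V]
    [InnerProductSpace ℝ V] (R : Set V) : Submonoid (Function.End V) :=
  Submonoid.closure {g | ∃ α ∈ R, g = rootReflection α}

/-- The set of twisted weights `ν_{β₁} + ⋯ + ν_{β_M}` over decompositions of `μ`
into positive roots (with repetitions), where `ν_β = (β,β)/m₀` and `m₀` is the
minimal squared root length.  A decomposition is encoded as a list of pairs
`(β, ν_β)`. -/
def twistedDecompWeights {V : Type*} [NormedAddCommGroup V] [InnerProductSpace ℝ V]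
    (P : Set V) (m₀ : ℝ) (μ : V) : Set ℕ :=
  {N | ∃ l : List (V × ℕ),
    (∀ p ∈ l, p.1 ∈ P ∧ ⟪p.1, p.1⟫ = (p.2 : ℝ) * m₀) ∧
    (l.map Prod.fst).sum = μ ∧ (l.map Prod.snd).sum = N}

section Aux

variable {V : Type*} [NormedAddCommGroup V] [InnerProductSpace ℝ V] {R : Set V}

lemma IsRootSystem.inner_self_pos' (hR : IsRootSystem R) {α : V} (hα : α ∈ R) :
    (0:ℝ) < ⟪α, α⟫ :=
  real_inner_self_nonneg.lt_of_ne fun h =>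
    hR.ne_zero α hα (inner_self_eq_zero.1 h.symm)

lemma IsRootSystem.neg_mem' (hR : IsRootSystem R) {α : V} (hα : α ∈ R) : -α ∈ R := by
  have h := hR.reflect_mem α hα α hα
  have hne : ⟪α,α⟫ ≠ (0:ℝ) := (hR.inner_self_pos' hα).ne'
  have h2 : (2 * ⟪α, α⟫ / ⟪α, α⟫ : ℝ) = 2 := by
    rw [mul_div_assoc, div_self hne, mul_one]
  rw [h2] at h
  have h3 : α - (2:ℝ) • α = -α := by rw [two_smul]; abel
  rwa [h3] at h

lemma weyl_props (hR : IsRootSystem R) {w : Function.End V} (hw : w ∈ weylMonoid R) :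
    (∀ x y : V, ⟪w x, w y⟫ = ⟪x, y⟫) ∧ (∀ α ∈ R, w α ∈ R) := by
  induction hw using Submonoid.closure_induction with
  | mem g hg =>
    obtain ⟨α, hα, rfl⟩ := hg
    have hne : ⟪α,α⟫ ≠ (0:ℝ) := (hR.inner_self_pos' hα).ne'
    refine ⟨fun x y => ?_, fun β hβ => hR.reflect_mem α hα β hβ⟩
    show ⟪x - (2 * ⟪x, α⟫ / ⟪α, α⟫) • α, y - (2 * ⟪y, α⟫ / ⟪α, α⟫) • α⟫ = ⟪x, y⟫
    simp only [inner_sub_left, inner_sub_right,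
      real_inner_smul_left, real_inner_smul_right]
    rw [real_inner_comm α x, real_inner_comm α y]
    field_simp
    ring
  | one => exact ⟨fun x y => rfl, fun α hα => hα⟩
  | mul a b ha hb iha ihb =>
    refine ⟨fun x y => ?_, fun α hα => iha.2 _ (ihb.2 α hα)⟩
    calc ⟪(a*b) x, (a*b) y⟫ = ⟪a (b x), a (b y)⟫ := rfl
    _ = ⟪b x, b y⟫ := iha.1 _ _
    _ = ⟪x, y⟫ := ihb.1 _ _

/-- Connectivity: any two roots admit a common non-orthogonal root. -/
lemma IsRootSystem.exists_common_nonorth (hR : IsRootSystem R) {a b : V}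
    (ha : a ∈ R) (hb : b ∈ R) :
    ∃ γ ∈ R, ⟪a, γ⟫ ≠ (0:ℝ) ∧ ⟪b, γ⟫ ≠ (0:ℝ) := by
  set rel : V → V → Prop := fun u v => u ∈ R ∧ v ∈ R ∧ ⟪u, v⟫ ≠ (0:ℝ) with hrel
  have hconn : Relation.ReflTransGen rel a b := by
    by_contra hcon
    apply hR.irreducible
    refine ⟨{γ ∈ R | Relation.ReflTransGen rel a γ},
      {γ ∈ R | ¬ Relation.ReflTransGen rel a γ},
      ⟨a, ha, Relation.ReflTransGen.refl⟩, ⟨b, hb, hcon⟩, ?_, ?_⟩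
    · ext γ
      constructor
      · intro hγ
        by_cases hc : Relation.ReflTransGen rel a γ
        · exact Or.inl ⟨hγ, hc⟩
        · exact Or.inr ⟨hγ, hc⟩
      · rintro (⟨h, _⟩ | ⟨h, _⟩) <;> exact h
    · rintro γ₁ ⟨hγ₁R, hγ₁⟩ γ₂ ⟨hγ₂R, hγ₂⟩
      by_contra hne
      exact hγ₂ (hγ₁.tail ⟨hγ₁R, hγ₂R, hne⟩)
  clear hb
  induction hconn with
  | refl => exact ⟨a, ha, (hR.inner_self_pos' ha).ne', (hR.inner_self_pos' ha).ne'⟩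
  | tail hac hcb ih =>
    rename_i c b'
    obtain ⟨hcR, hbR, hcb'⟩ := hcb
    obtain ⟨γ, hγR, h1, h2⟩ := ih
    by_cases hbγ : ⟪b', γ⟫ ≠ (0:ℝ)
    · exact ⟨γ, hγR, h1, hbγ⟩
    by_cases hac' : ⟪a, c⟫ ≠ (0:ℝ)
    · refine ⟨c, hcR, hac', ?_⟩
      rw [real_inner_comm]
      exact fun h => hcb' h
    push_neg at hbγ hac'
    refine ⟨γ - (2 * ⟪γ, c⟫ / ⟪c, c⟫) • c, hR.reflect_mem c hcR γ hγR, ?_, ?_⟩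
    · rw [inner_sub_right, real_inner_smul_right, hac', mul_zero, sub_zero]
      exact h1
    · rw [inner_sub_right, real_inner_smul_right, hbγ, zero_sub, neg_ne_zero]
      have hγc : ⟪γ, c⟫ ≠ 0 := by rw [real_inner_comm]; exact h2
      have hcc : ⟪c, c⟫ ≠ (0:ℝ) := (hR.inner_self_pos' hcR).ne'
      have hbc : ⟪b', c⟫ ≠ 0 := by rw [real_inner_comm]; exact hcb'
      exact mul_ne_zero (div_ne_zero (mul_ne_zero two_ne_zero hγc) hcc) hbc

/-- Non-proportional roots satisfy strict Cauchy-Schwarz. -/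
lemma IsRootSystem.strict_cs (hR : IsRootSystem R) {a b : V} (ha : a ∈ R) (hb : b ∈ R)
    (hab : a ≠ b) (hab' : a ≠ -b) : ⟪a, b⟫ * ⟪a, b⟫ < ⟪a, a⟫ * ⟪b, b⟫ := by
  have hApos : (0:ℝ) < ⟪a,a⟫ := hR.inner_self_pos' ha
  have hv : ⟪a,a⟫ • b - ⟪a,b⟫ • a ≠ 0 := by
    intro h
    have h1 : ⟪a,a⟫ • b = ⟪a,b⟫ • a := sub_eq_zero.1 h
    have hba : b = (⟪a,b⟫ / ⟪a,a⟫) • a := by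
      calc b = ⟪a,a⟫⁻¹ • (⟪a,a⟫ • b) := by
              rw [smul_smul, inv_mul_cancel₀ hApos.ne', one_smul]
        _ = ⟪a,a⟫⁻¹ • (⟪a,b⟫ • a) := by rw [h1]
        _ = (⟪a,b⟫ / ⟪a,a⟫) • a := by rw [smul_smul, div_eq_inv_mul, mul_comm]
    rcases hR.reduced a ha (⟪a,b⟫/⟪a,a⟫) (hba ▸ hb) with h2 | h2
    · exact hab (by rw [hba, h2, one_smul])
    · exact hab' (by rw [hba, h2, neg_one_smul, neg_neg])
  have hpos : (0:ℝ) < ⟪⟪a,a⟫ • b - ⟪a,b⟫ • a, ⟪a,a⟫ • b - ⟪a,b⟫ • a⟫ :=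
    real_inner_self_nonneg.lt_of_ne fun h => hv (inner_self_eq_zero.1 h.symm)
  have hexp : ⟪⟪a,a⟫ • b - ⟪a,b⟫ • a, ⟪a,a⟫ • b - ⟪a,b⟫ • a⟫
      = ⟪a,a⟫ * (⟪a,a⟫ * ⟪b,b⟫ - ⟪a,b⟫ * ⟪a,b⟫) := by
    simp only [inner_sub_left, inner_sub_right, real_inner_smul_left,
      real_inner_smul_right, real_inner_comm b a]
    ring
  rw [hexp] at hpos
  nlinarith

/-- Two distinct non-orthogonal short roots pair to `± m₀/2`. -/
lemma IsRootSystem.short_pair (hR : IsRootSystem R) {m₀ : ℝ} {a b : V}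
    (ha : a ∈ R) (hb : b ∈ R) (haa : ⟪a,a⟫ = m₀) (hbb : ⟪b,b⟫ = m₀)
    (hne : ⟪a,b⟫ ≠ 0) (hab : a ≠ b) (hab' : a ≠ -b) :
    ⟪a,b⟫ = m₀/2 ∨ ⟪a,b⟫ = -(m₀/2) := by
  have hm0 : (0:ℝ) < m₀ := haa ▸ hR.inner_self_pos' ha
  obtain ⟨k, hk⟩ := hR.integral b hb a ha
  rw [hbb] at hk
  have hcs := hR.strict_cs ha hb hab hab'
  rw [haa, hbb] at hcs
  have hk4 : (k:ℝ) * k < 4 := by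
    have h1 : (k:ℝ) = 2 * ⟪a,b⟫ / m₀ := hk.symm
    rw [h1, div_mul_div_comm, div_lt_iff₀ (by positivity)]
    nlinarith
  have hk0 : (k:ℝ) ≠ 0 := by
    rw [← hk]
    exact div_ne_zero (mul_ne_zero two_ne_zero hne) hm0.ne'
  have hkk : k = 1 ∨ k = -1 := by
    have h4 : k * k < 4 := by exact_mod_cast hk4
    have h0 : k ≠ 0 := by exact_mod_cast hk0
    rcases lt_or_gt_of_ne h0 with h | h
    · right; nlinarith
    · left; nlinarith
  rcases hkk with h | h <;> [left; right] <;>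
  · rw [h] at hk
    push_cast at hk
    field_simp at hk ⊢
    linarith

/-- Pairing of a short root with a strictly longer root. -/
lemma IsRootSystem.long_pair (hR : IsRootSystem R) {m₀ : ℝ} {a b : V}
    (ha : a ∈ R) (hb : b ∈ R) (haa : ⟪a,a⟫ = m₀)
    (hB : m₀ < ⟪b,b⟫) (hne : ⟪a,b⟫ ≠ 0) :
    (2*⟪a,b⟫/⟪b,b⟫ = 1 ∨ 2*⟪a,b⟫/⟪b,b⟫ = -1) ∧ (⟪b,b⟫ = 2*m₀ ∨ ⟪b,b⟫ = 3*m₀) := by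
  have hm0 : (0:ℝ) < m₀ := haa ▸ hR.inner_self_pos' ha
  have hBpos : (0:ℝ) < ⟪b,b⟫ := lt_trans hm0 hB
  obtain ⟨k, hk⟩ := hR.integral b hb a ha
  obtain ⟨k', hk'⟩ := hR.integral a ha b hb
  rw [haa, real_inner_comm a b] at hk'
  have hab : a ≠ b := fun h => absurd (h ▸ haa) hB.ne'
  have hab' : a ≠ -b := by
    intro h
    rw [h] at haa
    rw [inner_neg_neg] at haa
    exact hB.ne' haa
  have hcs := hR.strict_cs ha hb hab hab'
  rw [haa] at hcs
  have hk0 : (k:ℝ) ≠ 0 := by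
    rw [← hk]; exact div_ne_zero (mul_ne_zero two_ne_zero hne) hBpos.ne'
  have hk'0 : (k':ℝ) ≠ 0 := by
    rw [← hk']; exact div_ne_zero (mul_ne_zero two_ne_zero hne) hm0.ne'
  have hKlt : (k:ℝ) * k' < 4 := by
    rw [← hk, ← hk', div_mul_div_comm]
    rw [div_lt_iff₀ (by positivity)]
    nlinarith
  have hKpos : (0:ℝ) < (k:ℝ) * k' := by
    rw [← hk, ← hk', div_mul_div_comm]
    have h2 : (0:ℝ) < 2 * ⟪a,b⟫ * (2 * ⟪a,b⟫) := by
      rcases lt_or_gt_of_ne hne with h | h <;> nlinarith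
    positivity
  have habs : |(k:ℝ)| < |(k':ℝ)| := by
    rw [← hk, ← hk', abs_div, abs_div, abs_of_pos hBpos, abs_of_pos hm0]
    have hnum : (0:ℝ) < |2 * ⟪a,b⟫| := abs_pos.2 (mul_ne_zero two_ne_zero hne)
    exact div_lt_div_of_pos_left hnum hm0 hB
  have hKltZ : k * k' ≤ 3 := by
    have h : k * k' < 4 := by exact_mod_cast hKlt
    omega
  have hKposZ : 0 < k * k' := by exact_mod_cast hKpos
  have habsZ : |k| < |k'| := by
    have h1 : ((|k| : ℤ) : ℝ) < ((|k'| : ℤ) : ℝ) := by push_cast; exact habs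
    exact_mod_cast h1
  have hkZ0 : k ≠ 0 := by exact_mod_cast hk0
  have hk1 : |k| = 1 := by
    have h1 : 1 ≤ |k| := Int.one_le_abs hkZ0
    have h2 : |k| * |k'| ≤ 3 := by rwa [← abs_mul, abs_of_pos hKposZ]
    nlinarith
  have hkk : k = 1 ∨ k = -1 := abs_eq (by norm_num : (0:ℤ) ≤ 1) |>.1 hk1
  have h2t : 2 * ⟪a,b⟫ = (k:ℝ) * ⟪b,b⟫ := by
    field_simp at hk
    linarith
  have h2t' : 2 * ⟪a,b⟫ = (k':ℝ) * m₀ := by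
    field_simp at hk'
    linarith
  have hBK : ⟪b,b⟫ = ((k*k' : ℤ):ℝ) * m₀ := by
    have hsq : (k:ℝ) * k = 1 := by
      rcases hkk with h | h <;> rw [h] <;> norm_num
    calc ⟪b,b⟫ = ((k:ℝ)*k)*⟪b,b⟫ := by rw [hsq, one_mul]
      _ = (k:ℝ)*(2*⟪a,b⟫) := by rw [h2t]; ring
      _ = (k:ℝ)*((k':ℝ)*m₀) := by rw [h2t']
      _ = ((k*k':ℤ):ℝ)*m₀ := by push_cast; ring
  have hK2 : 2 ≤ k * k' := by
    have h1 : (1:ℝ) < ((k*k':ℤ):ℝ) := by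
      rw [← mul_lt_mul_iff_of_pos_right hm0, one_mul, ← hBK]
      exact hB
    have h2 : (1:ℤ) < k * k' := by exact_mod_cast h1
    omega
  refine ⟨?_, ?_⟩
  · rw [hk]
    rcases hkk with h | h <;> rw [h] <;> norm_num
  · have hK23 : k * k' = 2 ∨ k * k' = 3 := by omega
    rcases hK23 with h | h <;> [left; right] <;> rw [hBK, h] <;> push_cast <;> ring

lemma inner_sub_sub' (a b : V) : ⟪a-b, a-b⟫ = ⟪a,a⟫ - 2*⟪a,b⟫ + ⟪b,b⟫ := by
  simp only [inner_sub_left, inner_sub_right, real_inner_comm b a]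
  ring

lemma inner_add_add' (a b : V) : ⟪a+b, a+b⟫ = ⟪a,a⟫ + 2*⟪a,b⟫ + ⟪b,b⟫ := by
  simp only [inner_add_left, inner_add_right, real_inner_comm b a]
  ring

/-- If `⟪a,b⟫ = ⟪b,b⟫/2` then `a - b ∈ R`. -/
lemma IsRootSystem.sub_mem_of_half (hR : IsRootSystem R) {a b : V}
    (ha : a ∈ R) (hb : b ∈ R) (h : ⟪a,b⟫ = ⟪b,b⟫/2) : a - b ∈ R := by
  have hbne : ⟪b,b⟫ ≠ (0:ℝ) := (hR.inner_self_pos' hb).ne'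
  have hrefl := hR.reflect_mem b hb a ha
  have hc : 2*⟪a,b⟫/⟪b,b⟫ = (1:ℝ) := by rw [h]; field_simp
  rwa [hc, one_smul] at hrefl

/-- If `⟪a,b⟫ = -⟪b,b⟫/2` then `a + b ∈ R`. -/
lemma IsRootSystem.add_mem_of_neg_half (hR : IsRootSystem R) {a b : V}
    (ha : a ∈ R) (hb : b ∈ R) (h : ⟪a,b⟫ = -(⟪b,b⟫/2)) : a + b ∈ R := by
  have hbne : ⟪b,b⟫ ≠ (0:ℝ) := (hR.inner_self_pos' hb).ne'
  have hrefl := hR.reflect_mem b hb a ha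
  have hc : 2*⟪a,b⟫/⟪b,b⟫ = (-1:ℝ) := by rw [h]; field_simp
  rwa [hc, neg_one_smul, sub_neg_eq_add] at hrefl

end Aux

section Decomp

variable {V : Type*} [NormedAddCommGroup V] [InnerProductSpace ℝ V] {R : Set V}
variable {f : V →ₗ[ℝ] ℝ} {m₀ : ℝ} {ϑ : V}

/-- Roots pairing positively with the dominant `ϑ` are positive. -/
lemma pos_of_inner (hR : IsRootSystem R) (hf : ∀ α ∈ R, f α ≠ 0)
    (hϑdom : ∀ α ∈ posRoots R f, 0 ≤ ⟪ϑ, α⟫) {γ : V} (hγ : γ ∈ R)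
    (h : 0 < ⟪ϑ,γ⟫) : γ ∈ posRoots R f := by
  rcases (hf γ hγ).lt_or_gt with hneg | hpos
  · exfalso
    have hmem : -γ ∈ posRoots R f := ⟨hR.neg_mem' hγ, by rw [map_neg]; linarith⟩
    have hdd := hϑdom _ hmem
    rw [inner_neg_right] at hdd
    linarith
  · exact ⟨hγ, hpos⟩

/-- Main construction: a weight-2 decomposition of `ϑ - β` for a short root `β`
orthogonal to `ϑ`. -/
lemma orth_decomp (hR : IsRootSystem R) (hf : ∀ α ∈ R, f α ≠ 0)
    (hlow : ∀ γ ∈ R, m₀ ≤ ⟪γ,γ⟫) (hϑR : ϑ ∈ R) (hϑshort : ⟪ϑ,ϑ⟫ = m₀)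
    (hϑdom : ∀ α ∈ posRoots R f, 0 ≤ ⟪ϑ, α⟫) {β : V} (hβR : β ∈ R)
    (hββ : ⟪β,β⟫ = m₀) (horth : ⟪ϑ,β⟫ = 0) :
    ∃ l : List (V × ℕ), (∀ p ∈ l, p.1 ∈ posRoots R f ∧ ⟪p.1,p.1⟫ = (p.2:ℝ)*m₀) ∧
      (l.map Prod.fst).sum = ϑ - β ∧ (l.map Prod.snd).sum = 2 := by
  have hm0 : (0:ℝ) < m₀ := hϑshort ▸ hR.inner_self_pos' hϑR
  have hβϑ : ⟪β,ϑ⟫ = 0 := by rw [real_inner_comm ϑ β]; exact horth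
  -- final construction from a suitable short root γ
  have final : ∀ γ ∈ R, ⟪γ,γ⟫ = m₀ → ⟪ϑ,γ⟫ = m₀/2 → ⟪β,γ⟫ = m₀/2 →
      ∃ l : List (V × ℕ), (∀ p ∈ l, p.1 ∈ posRoots R f ∧ ⟪p.1,p.1⟫ = (p.2:ℝ)*m₀) ∧
        (l.map Prod.fst).sum = ϑ - β ∧ (l.map Prod.snd).sum = 2 := by
    intro γ hγR hγγ h1 h2
    have hγβ : ⟪γ,β⟫ = m₀/2 := by rw [real_inner_comm β γ]; exact h2
    have hγ₁R : ϑ - γ ∈ R := hR.sub_mem_of_half hϑR hγR (by rw [hγγ]; exact h1)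
    have hγ₂R : γ - β ∈ R := hR.sub_mem_of_half hγR hβR (by rw [hββ]; exact hγβ)
    have hγ₁n : ⟪ϑ-γ, ϑ-γ⟫ = m₀ := by rw [inner_sub_sub', hϑshort, h1, hγγ]; ring
    have hγ₂n : ⟪γ-β, γ-β⟫ = m₀ := by rw [inner_sub_sub', hγγ, hγβ, hββ]; ring
    have hγ₁p : ϑ - γ ∈ posRoots R f := by
      apply pos_of_inner hR hf hϑdom hγ₁R
      rw [inner_sub_right, hϑshort, h1]
      linarith
    have hγ₂p : γ - β ∈ posRoots R f := by
      apply pos_of_inner hR hf hϑdom hγ₂R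
      rw [inner_sub_right, horth, h1]
      linarith
    refine ⟨[(ϑ-γ, 1), (γ-β, 1)], ?_, ?_, ?_⟩
    · intro p hp
      simp only [List.mem_cons, List.not_mem_nil, or_false] at hp
      rcases hp with rfl | rfl
      · exact ⟨hγ₁p, by rw [hγ₁n]; norm_num⟩
      · exact ⟨hγ₂p, by rw [hγ₂n]; norm_num⟩
    · simp only [List.map_cons, List.map_nil, List.sum_cons, List.sum_nil, add_zero]
      abel
    · rfl
  -- from any suitable short root with nonzero pairings
  have short_case : ∀ γ ∈ R, ⟪γ,γ⟫ = m₀ → ⟪ϑ,γ⟫ ≠ 0 → ⟪β,γ⟫ ≠ 0 →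
      ∃ l : List (V × ℕ), (∀ p ∈ l, p.1 ∈ posRoots R f ∧ ⟪p.1,p.1⟫ = (p.2:ℝ)*m₀) ∧
        (l.map Prod.fst).sum = ϑ - β ∧ (l.map Prod.snd).sum = 2 := by
    -- first normalize the sign of ⟪ϑ,γ⟫
    have stage2 : ∀ γ ∈ R, ⟪γ,γ⟫ = m₀ → ⟪ϑ,γ⟫ = m₀/2 → ⟪β,γ⟫ ≠ 0 →
        ∃ l : List (V × ℕ), (∀ p ∈ l, p.1 ∈ posRoots R f ∧ ⟪p.1,p.1⟫ = (p.2:ℝ)*m₀) ∧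
          (l.map Prod.fst).sum = ϑ - β ∧ (l.map Prod.snd).sum = 2 := by
      intro γ hγR hγγ h1 h2
      have hβγ : β ≠ γ := by
        intro h
        rw [← h, horth] at h1
        linarith
      have hβγ' : β ≠ -γ := by
        intro h
        have hγβn : γ = -β := by rw [h, neg_neg]
        rw [hγβn, inner_neg_right, horth, neg_zero] at h1
        linarith
      rcases hR.short_pair hβR hγR hββ hγγ h2 hβγ hβγ' with h3 | h3
      · exact final γ hγR hγγ h1 h3
      · -- use γ + β instead
        have hγβ : ⟪γ,β⟫ = -(⟪β,β⟫/2) := by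
          rw [real_inner_comm β γ, h3, hββ]
        have hγaR : γ + β ∈ R := hR.add_mem_of_neg_half hγR hβR hγβ
        apply final (γ + β) hγaR
        · rw [inner_add_add', hγγ, hγβ, hββ]; ring
        · rw [inner_add_right, h1, horth]; ring
        · rw [inner_add_right, h3, hββ]; ring
    intro γ hγR hγγ h1 h2
    have hϑγ : ϑ ≠ γ := fun h => h2 (by rw [← h]; exact hβϑ)
    have hϑγ' : ϑ ≠ -γ := by
      intro h
      have hγϑ : γ = -ϑ := by rw [h, neg_neg]
      exact h2 (by rw [hγϑ, inner_neg_right, hβϑ, neg_zero])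
    rcases hR.short_pair hϑR hγR hϑshort hγγ h1 hϑγ hϑγ' with h4 | h4
    · exact stage2 γ hγR hγγ h4 h2
    · refine stage2 (-γ) (hR.neg_mem' hγR) (by rw [inner_neg_neg]; exact hγγ)
        (by rw [inner_neg_right, h4]; ring)
        (by rw [inner_neg_right]; exact neg_ne_zero.2 h2)
  -- the case where ϑ - β is itself a (long) root
  have single : ϑ - β ∈ R →
      ∃ l : List (V × ℕ), (∀ p ∈ l, p.1 ∈ posRoots R f ∧ ⟪p.1,p.1⟫ = (p.2:ℝ)*m₀) ∧
        (l.map Prod.fst).sum = ϑ - β ∧ (l.map Prod.snd).sum = 2 := by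
    intro hμR
    have hμn : ⟪ϑ-β, ϑ-β⟫ = ((2:ℕ):ℝ)*m₀ := by
      rw [inner_sub_sub', hϑshort, horth, hββ]
      push_cast
      ring
    have hμp : ϑ - β ∈ posRoots R f := by
      apply pos_of_inner hR hf hϑdom hμR
      rw [inner_sub_right, hϑshort, horth]
      linarith
    refine ⟨[(ϑ-β, 2)], ?_, ?_, ?_⟩
    · intro p hp
      simp only [List.mem_singleton] at hp
      subst hp
      exact ⟨hμp, hμn⟩
    · simp only [List.map_cons, List.map_nil, List.sum_cons, List.sum_nil, add_zero]
    · rfl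
  -- now run the argument
  obtain ⟨γ, hγR, h1, h2⟩ := hR.exists_common_nonorth hϑR hβR
  by_cases hγs : ⟪γ,γ⟫ = m₀
  · exact short_case γ hγR hγs h1 h2
  have hγlong : m₀ < ⟪γ,γ⟫ := lt_of_le_of_ne (hlow γ hγR) (Ne.symm hγs)
  -- normalized long case
  have longcase : ∀ γ₀ ∈ R, m₀ < ⟪γ₀,γ₀⟫ → ⟪ϑ,γ₀⟫ = ⟪γ₀,γ₀⟫/2 → ⟪β,γ₀⟫ ≠ 0 →
      ∃ l : List (V × ℕ), (∀ p ∈ l, p.1 ∈ posRoots R f ∧ ⟪p.1,p.1⟫ = (p.2:ℝ)*m₀) ∧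
        (l.map Prod.fst).sum = ϑ - β ∧ (l.map Prod.snd).sum = 2 := by
    intro γ₀ hγ₀R hlong ht hb0
    have hBpos : (0:ℝ) < ⟪γ₀,γ₀⟫ := lt_trans hm0 hlong
    have ht0 : ⟪ϑ,γ₀⟫ ≠ 0 := by rw [ht]; positivity
    obtain ⟨_, hBB⟩ := hR.long_pair hϑR hγ₀R hϑshort hlong ht0
    have hδR : ϑ - γ₀ ∈ R := hR.sub_mem_of_half hϑR hγ₀R ht
    have hδn : ⟪ϑ-γ₀, ϑ-γ₀⟫ = m₀ := by rw [inner_sub_sub', hϑshort, ht]; ring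
    have hβδ : ⟪β, ϑ-γ₀⟫ = -⟪β,γ₀⟫ := by rw [inner_sub_right, hβϑ]; ring
    have hβδ0 : ⟪β, ϑ-γ₀⟫ ≠ 0 := by rw [hβδ]; exact neg_ne_zero.2 hb0
    have hϑδ : ⟪ϑ, ϑ-γ₀⟫ = m₀ - ⟪γ₀,γ₀⟫/2 := by rw [inner_sub_right, hϑshort, ht]
    rcases hBB with hB2 | hB3
    · -- ⟪γ₀,γ₀⟫ = 2 m₀ : then ϑ - β is a root
      obtain ⟨hε, _⟩ := hR.long_pair hβR hγ₀R hββ hlong hb0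
      apply single
      rcases hε with h5 | h5
      · -- ⟪β,γ₀⟫ = m₀, so γ₀ = ϑ + β
        have hbγ : ⟪β,γ₀⟫ = m₀ := by
          rw [hB2] at h5
          field_simp at h5
          linarith
        have hδβ : (ϑ - γ₀) + β = 0 := by
          apply (inner_self_eq_zero (𝕜 := ℝ)).1
          rw [inner_add_add', hδn, hββ, real_inner_comm β (ϑ - γ₀), hβδ, hbγ]
          ring
        have hγ₀eq : γ₀ = ϑ + β := by
          have h6 : ϑ + β - γ₀ = 0 := by rw [← hδβ]; abel
          have h7 := sub_eq_zero.1 h6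
          rw [← h7]
        have hγ₀β : ⟪γ₀,β⟫ = m₀ := by rw [real_inner_comm β γ₀]; exact hbγ
        have hrefl := hR.reflect_mem β hβR γ₀ hγ₀R
        have hc : 2*⟪γ₀,β⟫/⟪β,β⟫ = (2:ℝ) := by
          rw [hγ₀β, hββ]
          field_simp
        rw [hc] at hrefl
        have heq : γ₀ - (2:ℝ) • β = ϑ - β := by
          rw [hγ₀eq, two_smul]
          abel
        rwa [heq] at hrefl
      · -- ⟪β,γ₀⟫ = -m₀, so γ₀ = ϑ - β
        have hbγ : ⟪β,γ₀⟫ = -m₀ := by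
          rw [hB2] at h5
          field_simp at h5
          linarith
        have hδβ : (ϑ - γ₀) - β = 0 := by
          apply (inner_self_eq_zero (𝕜 := ℝ)).1
          rw [inner_sub_sub', hδn, hββ, real_inner_comm β (ϑ - γ₀), hβδ, hbγ]
          ring
        have hγ₀eq : γ₀ = ϑ - β := by
          have h6 : ϑ - β - γ₀ = 0 := by rw [← hδβ]; abel
          have h7 := sub_eq_zero.1 h6
          rw [← h7]
        rwa [← hγ₀eq]
    · -- ⟪γ₀,γ₀⟫ = 3 m₀ : ϑ - γ₀ is a short root non-orthogonal to both
      apply short_case (ϑ - γ₀) hδR hδn ?_ hβδ0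
      rw [hϑδ, hB3]
      intro hcon
      nlinarith
  rcases hR.long_pair hϑR hγR hϑshort hγlong h1 |>.1 with hc1 | hc1
  · apply longcase γ hγR hγlong ?_ h2
    have hBne : ⟪γ,γ⟫ ≠ (0:ℝ) := (lt_trans hm0 hγlong).ne'
    field_simp at hc1
    linarith
  · apply longcase (-γ) (hR.neg_mem' hγR) (by rw [inner_neg_neg]; exact hγlong) ?_
      (by rw [inner_neg_right]; exact neg_ne_zero.2 h2)
    rw [inner_neg_right, inner_neg_neg]
    have hBne : ⟪γ,γ⟫ ≠ (0:ℝ) := (lt_trans hm0 hγlong).ne'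
    field_simp at hc1
    linarith


/-- Structure of low-weight decompositions. -/
lemma decomp_cases (hR : IsRootSystem R) {m₀ : ℝ} (hm0 : (0:ℝ) < m₀) {μ : V} {N : ℕ}
    (h : N ∈ twistedDecompWeights (posRoots R f) m₀ μ) :
    (N = 0 → μ = 0) ∧ (N = 1 → ⟪μ,μ⟫ = m₀) := by
  obtain ⟨l, hl, hfst, hsnd⟩ := h
  have hone : ∀ p ∈ l, 1 ≤ p.2 := by
    intro p hp
    obtain ⟨hpP, hpn⟩ := hl p hp
    by_contra hc
    push_neg at hc
    have h0 : p.2 = 0 := by omega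
    rw [h0] at hpn
    push_cast at hpn
    rw [zero_mul] at hpn
    exact hR.ne_zero p.1 hpP.1 ((inner_self_eq_zero (𝕜:=ℝ)).1 hpn)
  rcases l with _ | ⟨p, _ | ⟨q, t⟩⟩
  · simp only [List.map_nil, List.sum_nil] at hfst hsnd
    subst hsnd
    exact ⟨fun _ => hfst.symm, fun h1 => absurd h1.symm (by norm_num)⟩
  · simp only [List.map_cons, List.map_nil, List.sum_cons, List.sum_nil,
      add_zero] at hfst hsnd
    have hp1 := hone p (by simp)
    constructor
    · intro h0
      omega
    · intro h1
      have hp2 : p.2 = 1 := by omega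
      obtain ⟨_, hpn⟩ := hl p (by simp)
      rw [← hfst, hpn, hp2]
      norm_num
  · have hp1 := hone p (by simp)
    have hq1 := hone q (by simp)
    simp only [List.map_cons, List.sum_cons] at hsnd
    constructor <;> intro h0 <;> omega

end Decomp

/-- Twisted extremal Kostant degree of the highest short root `ϑ` (the unique
dominant root of minimal length): for `w` in the Weyl group, `n^ν(ϑ,w) = 0` if
`w(ϑ) = ϑ`; `n^ν(ϑ,w) = 1` if `(w(ϑ),ϑ) > 0` and `w(ϑ) ≠ ϑ`; and
`n^ν(ϑ,w) = 2` if `(w(ϑ),ϑ) ≤ 0`. -/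
theorem twisted_kostant_highest_short_root {V : Type*} [NormedAddCommGroup V]
    [InnerProductSpace ℝ V] [FiniteDimensional ℝ V]
    (R : Set V) (hR : IsRootSystem R)
    (f : V →ₗ[ℝ] ℝ) (hf : ∀ α ∈ R, f α ≠ 0)
    (m₀ : ℝ) (hm₀ : IsLeast {x : ℝ | ∃ γ ∈ R, x = ⟪γ, γ⟫} m₀)
    (ϑ : V) (hϑR : ϑ ∈ R) (hϑshort : ⟪ϑ, ϑ⟫ = m₀)
    (hϑdom : ∀ α ∈ posRoots R f, 0 ≤ ⟪ϑ, α⟫)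
    (w : Function.End V) (hw : w ∈ weylMonoid R) :
    (w ϑ = ϑ → IsLeast (twistedDecompWeights (posRoots R f) m₀ (ϑ - w ϑ)) 0) ∧
    (0 < ⟪w ϑ, ϑ⟫ → w ϑ ≠ ϑ →
      IsLeast (twistedDecompWeights (posRoots R f) m₀ (ϑ - w ϑ)) 1) ∧
    (⟪w ϑ, ϑ⟫ ≤ 0 → IsLeast (twistedDecompWeights (posRoots R f) m₀ (ϑ - w ϑ)) 2) := by
  obtain ⟨winner, wroot⟩ := weyl_props hR hw
  have hm0 : (0:ℝ) < m₀ := hϑshort ▸ hR.inner_self_pos' hϑR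
  have hlow : ∀ γ ∈ R, m₀ ≤ ⟪γ,γ⟫ := fun γ hγ => hm₀.2 ⟨γ, hγ, rfl⟩
  have hwϑR : w ϑ ∈ R := wroot ϑ hϑR
  have hwϑn : ⟪w ϑ, w ϑ⟫ = m₀ := by rw [winner ϑ ϑ]; exact hϑshort
  have hfϑ : 0 < f ϑ := by
    rcases (hf ϑ hϑR).lt_or_gt with h | h
    · exfalso
      have hmem : -ϑ ∈ posRoots R f := ⟨hR.neg_mem' hϑR, by rw [map_neg]; linarith⟩
      have hd := hϑdom _ hmem
      rw [inner_neg_right, hϑshort] at hd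
      linarith
    · exact h
  refine ⟨?_, ?_, ?_⟩
  · -- w ϑ = ϑ
    intro hfix
    constructor
    · exact ⟨[], fun p hp => absurd hp List.not_mem_nil, by simp [hfix], rfl⟩
    · intro n _
      exact Nat.zero_le n
  · -- 0 < (wϑ, ϑ), wϑ ≠ ϑ
    intro hip hne
    have hcip : 0 < ⟪ϑ, w ϑ⟫ := by rw [real_inner_comm (w ϑ) ϑ]; exact hip
    have hϑwϑ : ⟪ϑ, w ϑ⟫ = m₀/2 := by
      have hne1 : ϑ ≠ w ϑ := Ne.symm hne
      have hne2 : ϑ ≠ -(w ϑ) := by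
        intro hcon
        nth_rewrite 1 [hcon] at hcip
        rw [inner_neg_left, hwϑn] at hcip
        linarith
      rcases hR.short_pair hϑR hwϑR hϑshort hwϑn hcip.ne' hne1 hne2 with h | h
      · exact h
      · exfalso
        rw [h] at hcip
        linarith
    have hμR : ϑ - w ϑ ∈ R := hR.sub_mem_of_half hϑR hwϑR (by rw [hwϑn]; exact hϑwϑ)
    have hμn : ⟪ϑ - w ϑ, ϑ - w ϑ⟫ = m₀ := by
      rw [inner_sub_sub', hϑshort, hϑwϑ, hwϑn]; ring
    have hμp : ϑ - w ϑ ∈ posRoots R f := by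
      apply pos_of_inner hR hf hϑdom hμR
      rw [inner_sub_right, hϑshort, hϑwϑ]
      linarith
    constructor
    · refine ⟨[(ϑ - w ϑ, 1)], ?_, by simp, rfl⟩
      intro p hp
      simp only [List.mem_singleton] at hp
      subst hp
      exact ⟨hμp, by rw [hμn]; norm_num⟩
    · intro n hn
      rcases Nat.eq_zero_or_pos n with h0 | h1
      · exfalso
        have hz := (decomp_cases hR hm0 hn).1 h0
        exact hne (sub_eq_zero.1 hz).symm
      · exact h1
  · -- (wϑ, ϑ) ≤ 0
    intro hle
    have hcip : ⟪ϑ, w ϑ⟫ ≤ 0 := by rw [real_inner_comm (w ϑ) ϑ]; exact hle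
    constructor
    · rcases (hf _ hwϑR).lt_or_gt with hneg | hpos
      · have hϑpos : ϑ ∈ posRoots R f := ⟨hϑR, hfϑ⟩
        have hnwp : -(w ϑ) ∈ posRoots R f :=
          ⟨hR.neg_mem' hwϑR, by rw [map_neg]; linarith⟩
        refine ⟨[(ϑ,1), (-(w ϑ),1)], ?_, ?_, rfl⟩
        · intro p hp
          simp only [List.mem_cons, List.not_mem_nil, or_false] at hp
          rcases hp with rfl | rfl
          · exact ⟨hϑpos, by rw [hϑshort]; norm_num⟩
          · exact ⟨hnwp, by rw [inner_neg_neg, hwϑn]; norm_num⟩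
        · simp only [List.map_cons, List.map_nil, List.sum_cons, List.sum_nil, add_zero]
          abel
      · have h0 : ⟪ϑ, w ϑ⟫ = 0 :=
          le_antisymm hcip (hϑdom _ ⟨hwϑR, hpos⟩)
        exact orth_decomp hR hf hlow hϑR hϑshort hϑdom hwϑR hwϑn h0
    · intro n hn
      by_contra hc
      push_neg at hc
      have h01 : n = 0 ∨ n = 1 := by omega
      rcases h01 with h0 | h1
      · have hz := (decomp_cases hR hm0 hn).1 h0
        have heq : ϑ = w ϑ := sub_eq_zero.1 hz
        rw [← heq, hϑshort] at hle
        linarith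
      · have hz := (decomp_cases hR hm0 hn).2 h1
        rw [inner_sub_sub', hϑshort, hwϑn] at hz
        linarith
end
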